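/- For any set S of intervals of [n+1] (each a nonempty proper interval) with |S| > i_max + 1, the intersection graph on S — where two intervals I, J are adjacent iff (I ⊆ J or J ⊆ I or I ∩ J = ∅) and not (I ∩ J = ∅ and I ∪ J is an interval) — is connected. -/

import Mathlib

/-- An interval `{a, a+1, ..., b}` with `1 ≤ a ≤ b ≤ n+1`, viewed inside `[n+1]`. -/
def IsInterval (n : ℕ) (S : Finset ℕ) : Prop :=
  ∃ a b : ℕ, 1 ≤ a ∧ a ≤ b ∧ b ≤ n + 1 ∧ S = Finset.Icc a b

/-- `γ̃` either intersects `γ` nontrivially, or is disjoint from `γ` with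
`γ ∪ γ̃` an interval (connected union in the path graph). -/
def iRel (n : ℕ) (γ J : Finset ℕ) : Prop :=
  (γ ∩ J ≠ ∅ ∧ γ ∩ J ≠ γ ∧ γ ∩ J ≠ J) ∨ (γ ∩ J = ∅ ∧ IsInterval n (γ ∪ J))

/-- `i(γ)`: the number of intervals `γ̃` related to `γ` as above. -/
noncomputable def iCount (n : ℕ) (γ : Finset ℕ) : ℕ :=
  Nat.card {J : Finset ℕ // IsInterval n J ∧ iRel n γ J}

/-- `i_max`: the maximum of `i(γ)` over all intervals `γ`. -/
noncomputable def iMax (n : ℕ) : ℕ :=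
  sSup {k | ∃ γ : Finset ℕ, IsInterval n γ ∧ iCount n γ = k}

open Finset

lemma icc_inter_icc_nat (a b c d : ℕ) :
    Finset.Icc a b ∩ Finset.Icc c d = Finset.Icc (max a c) (min b d) := by
  ext x; simp only [Finset.mem_Icc, Finset.mem_inter]; omega

lemma icc_union_icc {a b c d : ℕ} (h1 : a ≤ b) (h2 : c ≤ d) (hbc : b + 1 = c) :
    Finset.Icc a b ∪ Finset.Icc c d = Finset.Icc a d := by
  ext x; simp only [Finset.mem_union, Finset.mem_Icc]; omega

lemma cross_to_iRel {n a b c d : ℕ} (ha : 1 ≤ a) (hab : a ≤ b) (hcd : c ≤ d) (hd : d ≤ n + 1)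
    (h1 : a < c) (h2 : c ≤ b + 1) (h3 : b < d) :
    iRel n (Finset.Icc a b) (Finset.Icc c d) := by
  rcases eq_or_lt_of_le h2 with heq | hlt
  · right
    constructor
    · rw [icc_inter_icc_nat]
      apply Finset.Icc_eq_empty
      omega
    · rw [icc_union_icc hab hcd heq.symm]
      exact ⟨a, d, ha, by omega, hd, rfl⟩
  · have hcb : c ≤ b := by omega
    left
    refine ⟨?_, ?_, ?_⟩
    · rw [icc_inter_icc_nat]
      intro h
      have hmem : max a c ∈ Finset.Icc (max a c) (min b d) :=
        Finset.mem_Icc.mpr ⟨le_rfl, by omega⟩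
      rw [h] at hmem
      exact absurd hmem (Finset.notMem_empty _)
    · intro h
      have h' := (Finset.Icc_subset_Icc_iff hab).mp (Finset.inter_eq_left.mp h)
      omega
    · intro h
      have h' := (Finset.Icc_subset_Icc_iff hcd).mp (Finset.inter_eq_right.mp h)
      omega

lemma iRel_to_cross {n a b c d : ℕ} (hab : a ≤ b) (hcd : c ≤ d)
    (h : iRel n (Finset.Icc a b) (Finset.Icc c d)) :
    (a < c ∧ c ≤ b + 1 ∧ b < d) ∨ (c < a ∧ a ≤ d + 1 ∧ d < b) := by
  rcases h with ⟨h1, h2, h3⟩ | ⟨h1, h2⟩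
  · rw [icc_inter_icc_nat] at h1
    have hne : max a c ≤ min b d := by
      by_contra hcon
      exact h1 (Finset.Icc_eq_empty hcon)
    have h2' : ¬ (c ≤ a ∧ b ≤ d) := by
      rintro ⟨u, v⟩
      apply h2
      rw [icc_inter_icc_nat]
      have e1 : max a c = a := by omega
      have e2 : min b d = b := by omega
      rw [e1, e2]
    have h3' : ¬ (a ≤ c ∧ d ≤ b) := by
      rintro ⟨u, v⟩
      apply h3
      rw [icc_inter_icc_nat]
      have e1 : max a c = c := by omega
      have e2 : min b d = d := by omega
      rw [e1, e2]
    omega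
  · obtain ⟨u, w, hu, huw, hwn, heq⟩ := h2
    have hdisj : b < c ∨ d < a := by
      by_contra hcon
      push_neg at hcon
      have hmem : max a c ∈ Finset.Icc a b ∩ Finset.Icc c d := by
        rw [icc_inter_icc_nat]
        exact Finset.mem_Icc.mpr ⟨le_rfl, by omega⟩
      rw [h1] at hmem
      exact absurd hmem (Finset.notMem_empty _)
    have hmem : ∀ x : ℕ, ((a ≤ x ∧ x ≤ b) ∨ (c ≤ x ∧ x ≤ d)) ↔ (u ≤ x ∧ x ≤ w) := by
      intro x
      have := Finset.ext_iff.mp heq x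
      simpa [Finset.mem_union, Finset.mem_Icc] using this
    rcases hdisj with hbc | hda
    · left
      have hb1 := (hmem b).mp (Or.inl ⟨hab, le_rfl⟩)
      have hc1 := (hmem c).mp (Or.inr ⟨le_rfl, hcd⟩)
      have hb2 := (hmem (b+1)).mpr ⟨by omega, by omega⟩
      omega
    · right
      have hb1 := (hmem a).mp (Or.inl ⟨le_rfl, hab⟩)
      have hc1 := (hmem d).mp (Or.inr ⟨hcd, le_rfl⟩)
      have hb2 := (hmem (d+1)).mpr ⟨by omega, by omega⟩
      omega

lemma isInterval_subset {n : ℕ} {J : Finset ℕ} (h : IsInterval n J) :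
    J ⊆ Finset.Icc 1 (n+1) := by
  obtain ⟨a, b, ha, hab, hb, rfl⟩ := h
  exact Finset.Icc_subset_Icc ha hb


lemma subtype_map_inj {α : Type*} {P Q : α → Prop} (f : ∀ a, P a → Q a) :
    Function.Injective (fun x : {a // P a} => (⟨x.1, f x.1 x.2⟩ : {a // Q a})) := by
  intro x y h
  apply Subtype.ext
  have : (⟨x.1, f x.1 x.2⟩ : {a // Q a}).val = (⟨y.1, f y.1 y.2⟩ : {a // Q a}).val :=
    congrArg Subtype.val h
  exact this

lemma finite_intervals {n : ℕ} (P : Finset ℕ → Prop) (hP : ∀ J, P J → IsInterval n J) :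
    Finite {J : Finset ℕ // P J} := by
  apply Finite.of_injective
    (fun x : {J : Finset ℕ // P J} =>
      (⟨x.1, Finset.mem_powerset.mpr (isInterval_subset (hP x.1 x.2))⟩ :
        {J // J ∈ (Finset.Icc 1 (n+1)).powerset}))
  exact subtype_map_inj
    (fun J h => Finset.mem_powerset.mpr (isInterval_subset (hP J h)))

lemma iCount_le {n : ℕ} (γ : Finset ℕ) : iCount n γ ≤ (Finset.Icc 1 (n+1)).powerset.card := by
  unfold iCount
  have : Nat.card {J // J ∈ (Finset.Icc 1 (n+1)).powerset} = (Finset.Icc 1 (n+1)).powerset.card := by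
    rw [Nat.card_eq_fintype_card, Fintype.card_coe]
  rw [← this]
  exact Nat.card_le_card_of_injective
    _ (subtype_map_inj (fun (J : Finset ℕ) (h : IsInterval n J ∧ iRel n γ J) =>
      Finset.mem_powerset.mpr (isInterval_subset h.1)))

lemma iMax_bddAbove {n : ℕ} :
    BddAbove {k | ∃ γ : Finset ℕ, IsInterval n γ ∧ iCount n γ = k} := by
  refine ⟨(Finset.Icc 1 (n+1)).powerset.card, ?_⟩
  rintro k ⟨γ, hγ, rfl⟩
  exact iCount_le γ

lemma iCount_lower {n : ℕ} :
    ((n+2)/2) * ((n+1) - (n+2)/2) ≤ iCount n (Finset.Icc 1 ((n+2)/2)) := by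
  set K := (n+2)/2 with hK
  set N := n+1 with hN
  have hK1 : 1 ≤ K := by omega
  have hKN : K ≤ N := by omega
  set W : Finset (Finset ℕ) :=
    ((Finset.Icc 2 (K+1)) ×ˢ (Finset.Icc (K+1) N)).image (fun p => Finset.Icc p.1 p.2) with hW
  have hWmem : ∀ J ∈ W, IsInterval n J ∧ iRel n (Finset.Icc 1 K) J := by
    intro J hJ
    rw [hW, Finset.mem_image] at hJ
    obtain ⟨p, hp, rfl⟩ := hJ
    rw [Finset.mem_product, Finset.mem_Icc, Finset.mem_Icc] at hp
    refine ⟨⟨p.1, p.2, by omega, by omega, by omega, rfl⟩, ?_⟩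
    exact cross_to_iRel le_rfl hK1 (by omega) (by omega) (by omega) (by omega) (by omega)
  have hWcard : W.card = K * (N - K) := by
    rw [hW, Finset.card_image_of_injOn]
    · rw [Finset.card_product, Nat.card_Icc, Nat.card_Icc]
      congr 1 <;> omega
    · intro p hp q hq h
      rw [Finset.mem_coe, Finset.mem_product, Finset.mem_Icc, Finset.mem_Icc] at hp hq
      have h' : Finset.Icc p.1 p.2 = Finset.Icc q.1 q.2 := h
      have h1 : p.1 ∈ Finset.Icc q.1 q.2 := by
        rw [← h']; exact Finset.mem_Icc.mpr ⟨le_rfl, by omega⟩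
      have h2 : q.1 ∈ Finset.Icc p.1 p.2 := by
        rw [h']; exact Finset.mem_Icc.mpr ⟨le_rfl, by omega⟩
      have h3 : p.2 ∈ Finset.Icc q.1 q.2 := by
        rw [← h']; exact Finset.mem_Icc.mpr ⟨by omega, le_rfl⟩
      have h4 : q.2 ∈ Finset.Icc p.1 p.2 := by
        rw [h']; exact Finset.mem_Icc.mpr ⟨by omega, le_rfl⟩
      rw [Finset.mem_Icc] at h1 h2 h3 h4
      have : p.1 = q.1 := by omega
      have : p.2 = q.2 := by omega
      exact Prod.ext ‹p.1 = q.1› ‹p.2 = q.2›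
  haveI : Finite {J : Finset ℕ // IsInterval n J ∧ iRel n (Finset.Icc 1 K) J} :=
    finite_intervals _ (fun J h => h.1)
  calc K * (N - K) = W.card := hWcard.symm
    _ = Nat.card {J // J ∈ W} := by rw [Nat.card_eq_fintype_card, Fintype.card_coe]
    _ ≤ iCount n (Finset.Icc 1 K) := by
        exact Nat.card_le_card_of_injective
          _ (subtype_map_inj hWmem)

lemma iMax_lower {n : ℕ} : ((n+2)/2) * ((n+1) - (n+2)/2) ≤ iMax n := by
  refine le_trans iCount_lower (le_csSup iMax_bddAbove ?_)
  exact ⟨Finset.Icc 1 ((n+2)/2), ⟨1, (n+2)/2, le_rfl, by omega, by omega, rfl⟩, rfl⟩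

lemma numeric_parity (n : ℕ) :
    (n+1) * (n+1) ≤ 4 * (((n+2)/2) * ((n+1) - (n+2)/2)) + 3 := by
  rcases Nat.even_or_odd n with ⟨m, rfl⟩ | ⟨m, rfl⟩
  · have e1 : (m + m + 2)/2 = m + 1 := by omega
    rw [e1]
    have e2 : (m + m + 1) - (m + 1) = m := by omega
    rw [e2]
    nlinarith
  · have e1 : (2*m + 1 + 2)/2 = m + 1 := by omega
    rw [e1]
    have e2 : (2*m + 1 + 1) - (m + 1) = m + 1 := by omega
    rw [e2]
    nlinarith

lemma four_mul_le_sq (p q : ℕ) : 4*(p*q) ≤ (p+q)*(p+q) := by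
  rcases le_total p q with h | h
  · obtain ⟨t, rfl⟩ : ∃ t, q = p + t := ⟨q - p, by omega⟩
    nlinarith
  · obtain ⟨t, rfl⟩ : ∃ t, p = q + t := ⟨p - q, by omega⟩
    nlinarith

lemma final_num (cA cB p q r s n : ℕ) (h1 : cA ≤ p*q) (h2 : cB ≤ r*s)
    (hf : 2 ≤ p+q) (he : 2 ≤ r+s) (htot : p+q+(r+s) ≤ n+3) :
    4*(cA+cB) ≤ (n+1)*(n+1)+4 := by
  obtain ⟨f, hfe⟩ : ∃ f, p+q = f+2 := ⟨p+q-2, by omega⟩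
  obtain ⟨e, hee⟩ : ∃ e, r+s = e+2 := ⟨r+s-2, by omega⟩
  have hA := four_mul_le_sq p q
  have hB := four_mul_le_sq r s
  rw [hfe] at hA
  rw [hee] at hB
  have h1' : 4*cA ≤ 4*(p*q) := by exact Nat.mul_le_mul_left 4 h1
  have h2' : 4*cB ≤ 4*(r*s) := by exact Nat.mul_le_mul_left 4 h2
  have hfen : f + e + 2 ≤ n+1 := by omega
  have key : (f+2)*(f+2) + (e+2)*(e+2) ≤ (f+e+2)*(f+e+2) + 4 := by nlinarith
  have last : (f+e+2)*(f+e+2) ≤ (n+1)*(n+1) := Nat.mul_le_mul hfen hfen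
  linarith

lemma split_bound {V : Type*} (B : Finset V) (lo hi : V → ℕ)
    (hlohi : ∀ y ∈ B, lo y ≤ hi y)
    (hinj : ∀ y ∈ B, ∀ y' ∈ B, lo y = lo y' → hi y = hi y' → y = y')
    (p q : ℕ)
    (hcr : ∀ y ∈ B, (p < lo y ∧ lo y ≤ q + 1 ∧ q < hi y) ∨
      (lo y < p ∧ p ≤ hi y + 1 ∧ hi y < q)) :
    B.card ≤
      ((B.image lo ∪ B.image (fun x => hi x + 2)).filter (fun t => p < t ∧ t < q + 2)).card *
      ((B.image lo ∪ B.image (fun x => hi x + 2)).filter (fun t => ¬(p < t ∧ t < q + 2))).card := by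
  classical
  set E := B.image lo ∪ B.image (fun x => hi x + 2) with hE
  set E₁ := E.filter (fun t => p < t ∧ t < q + 2) with hE1
  set E₂ := E.filter (fun t => ¬(p < t ∧ t < q + 2)) with hE2
  rw [← Finset.card_product]
  apply Finset.card_le_card_of_injOn
    (fun y => if p < lo y then (lo y, hi y + 2) else (hi y + 2, lo y))
  · intro y hy
    have hlY : lo y ∈ E := Finset.mem_union_left _ (Finset.mem_image_of_mem _ hy)
    have hhY : hi y + 2 ∈ E := Finset.mem_union_right _ (Finset.mem_image_of_mem _ hy)
    rcases hcr y hy with ⟨c1, c2, c3⟩ | ⟨c1, c2, c3⟩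
    · dsimp only
      rw [if_pos c1]
      exact Finset.mem_product.mpr
        ⟨Finset.mem_filter.mpr ⟨hlY, c1, by omega⟩,
         Finset.mem_filter.mpr ⟨hhY, by omega⟩⟩
    · dsimp only
      rw [if_neg (show ¬ p < lo y by omega)]
      exact Finset.mem_product.mpr
        ⟨Finset.mem_filter.mpr ⟨hhY, by omega⟩,
         Finset.mem_filter.mpr ⟨hlY, by omega⟩⟩
  · intro y hy y' hy' h
    simp only [Finset.mem_coe] at hy hy'
    have hl := hlohi y hy
    have hl' := hlohi y' hy'
    dsimp only at h
    split_ifs at h with b1 b2 b2 <;> rw [Prod.mk.injEq] at h <;>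
      obtain ⟨e1, e2⟩ := h
    · exact hinj y hy y' hy' e1 (by omega)
    · omega
    · omega
    · exact hinj y hy y' hy' e2 (by omega)


theorem stmt12 {n : ℕ} (S : Finset (Finset ℕ))
    (hS : ∀ I ∈ S, IsInterval n I ∧ I ≠ Finset.Icc 1 (n + 1))
    (hcard : iMax n + 1 < S.card) :
    (SimpleGraph.fromRel fun I J : {I // I ∈ S} =>
        (I.1 ⊆ J.1 ∨ J.1 ⊆ I.1 ∨ I.1 ∩ J.1 = ∅) ∧
          ¬(I.1 ∩ J.1 = ∅ ∧ IsInterval n (I.1 ∪ J.1))).Connected := by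
  classical
  by_contra hnc
  set G := (SimpleGraph.fromRel fun I J : {I // I ∈ S} =>
        (I.1 ⊆ J.1 ∨ J.1 ⊆ I.1 ∨ I.1 ∩ J.1 = ∅) ∧
          ¬(I.1 ∩ J.1 = ∅ ∧ IsInterval n (I.1 ∪ J.1))) with hG
  have hSpos : 0 < S.card := by omega
  have hne : Nonempty {I // I ∈ S} := by
    obtain ⟨x, hx⟩ := Finset.card_pos.mp hSpos
    exact ⟨⟨x, hx⟩⟩
  obtain ⟨v, w, hvw⟩ : ∃ u v : {I // I ∈ S}, ¬ G.Reachable u v := by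
    by_contra h
    push_neg at h
    exact hnc ((SimpleGraph.connected_iff G).mpr ⟨h, hne⟩)
  have hspec : ∀ x : {I // I ∈ S},
      ∃ a b : ℕ, 1 ≤ a ∧ a ≤ b ∧ b ≤ n + 1 ∧ x.1 = Finset.Icc a b :=
    fun x => (hS x.1 x.2).1
  choose lo hi h1 h2 h3 h4 using hspec
  set A := Finset.univ.filter (fun x : {I // I ∈ S} => G.Reachable v x) with hA
  set B := Finset.univ.filter (fun x : {I // I ∈ S} => ¬ G.Reachable v x) with hB
  have hvA : v ∈ A := Finset.mem_filter.mpr ⟨Finset.mem_univ _, SimpleGraph.Reachable.refl v⟩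
  have hwB : w ∈ B := Finset.mem_filter.mpr ⟨Finset.mem_univ _, hvw⟩
  have hABcard : A.card + B.card = S.card := by
    rw [hA, hB, Finset.card_filter_add_card_filter_not]
    simp [Finset.card_univ]
  have hcross : ∀ x ∈ A, ∀ y ∈ B,
      (lo x < lo y ∧ lo y ≤ hi x + 1 ∧ hi x < hi y) ∨
      (lo y < lo x ∧ lo x ≤ hi y + 1 ∧ hi y < hi x) := by
    intro x hx y hy
    have hrx : G.Reachable v x := (Finset.mem_filter.mp hx).2
    have hry : ¬ G.Reachable v y := (Finset.mem_filter.mp hy).2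
    have hxy : x ≠ y := fun h => hry (h ▸ hrx)
    have hadj : ¬ G.Adj x y := fun h => hry (hrx.trans h.reachable)
    have hirel : iRel n x.1 y.1 := by
      rw [hG, SimpleGraph.fromRel_adj] at hadj
      push_neg at hadj
      obtain ⟨hr1, hr2⟩ := hadj hxy
      by_cases hd : x.1 ∩ y.1 = ∅ ∧ IsInterval n (x.1 ∪ y.1)
      · exact Or.inr hd
      · have hnP : ¬ (x.1 ⊆ y.1 ∨ y.1 ⊆ x.1 ∨ x.1 ∩ y.1 = ∅) := fun hP => hd (hr1 hP)
        push_neg at hnP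
        obtain ⟨ha1, ha2, ha3⟩ := hnP
        refine Or.inl ⟨ha3.ne_empty, ?_, ?_⟩
        · exact fun h => ha1 (Finset.inter_eq_left.mp h)
        · exact fun h => ha2 (Finset.inter_eq_right.mp h)
    rw [h4 x, h4 y] at hirel
    exact iRel_to_cross (h2 x) (h2 y) hirel
  set F := A.image lo ∪ A.image (fun x => hi x + 2) with hF
  set E := B.image lo ∪ B.image (fun x => hi x + 2) with hE
  have hmemF : ∀ t ∈ F, ∃ x ∈ A, t = lo x ∨ t = hi x + 2 := by
    intro t ht
    rw [hF, Finset.mem_union, Finset.mem_image, Finset.mem_image] at ht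
    rcases ht with ⟨x, hx, rfl⟩ | ⟨x, hx, rfl⟩
    · exact ⟨x, hx, Or.inl rfl⟩
    · exact ⟨x, hx, Or.inr rfl⟩
  have hmemE : ∀ t ∈ E, ∃ y ∈ B, t = lo y ∨ t = hi y + 2 := by
    intro t ht
    rw [hE, Finset.mem_union, Finset.mem_image, Finset.mem_image] at ht
    rcases ht with ⟨y, hy, rfl⟩ | ⟨y, hy, rfl⟩
    · exact ⟨y, hy, Or.inl rfl⟩
    · exact ⟨y, hy, Or.inr rfl⟩
  have hdisj : Disjoint F E := by
    rw [Finset.disjoint_left]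
    intro t htF htE
    obtain ⟨x, hx, hxt⟩ := hmemF t htF
    obtain ⟨y, hy, hyt⟩ := hmemE t htE
    have := hcross x hx y hy
    omega
  have hcards : F.card + E.card ≤ n + 3 := by
    have hsub : F ∪ E ⊆ Finset.Icc 1 (n + 3) := by
      intro t ht
      rw [Finset.mem_union] at ht
      rw [Finset.mem_Icc]
      rcases ht with ht | ht
      · obtain ⟨x, hx, hxt⟩ := hmemF t ht
        have := h1 x; have := h2 x; have := h3 x
        omega
      · obtain ⟨y, hy, hyt⟩ := hmemE t ht
        have := h1 y; have := h2 y; have := h3 y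
        omega
    calc F.card + E.card = (F ∪ E).card := (Finset.card_union_of_disjoint hdisj).symm
      _ ≤ (Finset.Icc 1 (n + 3)).card := Finset.card_le_card hsub
      _ = n + 3 := by rw [Nat.card_Icc]; omega
  have hF2 : 2 ≤ F.card := by
    have hsub : ({lo v, hi v + 2} : Finset ℕ) ⊆ F := by
      intro t ht
      rw [Finset.mem_insert, Finset.mem_singleton] at ht
      rcases ht with rfl | rfl
      · exact Finset.mem_union_left _ (Finset.mem_image_of_mem _ hvA)
      · exact Finset.mem_union_right _ (Finset.mem_image_of_mem _ hvA)
    calc 2 = ({lo v, hi v + 2} : Finset ℕ).card := by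
            rw [Finset.card_pair (by have := h2 v; omega)]
      _ ≤ F.card := Finset.card_le_card hsub
  have hE2 : 2 ≤ E.card := by
    have hsub : ({lo w, hi w + 2} : Finset ℕ) ⊆ E := by
      intro t ht
      rw [Finset.mem_insert, Finset.mem_singleton] at ht
      rcases ht with rfl | rfl
      · exact Finset.mem_union_left _ (Finset.mem_image_of_mem _ hwB)
      · exact Finset.mem_union_right _ (Finset.mem_image_of_mem _ hwB)
    calc 2 = ({lo w, hi w + 2} : Finset ℕ).card := by
            rw [Finset.card_pair (by have := h2 w; omega)]
      _ ≤ E.card := Finset.card_le_card hsub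
  -- B side bound with pivot v
  have hinjB : ∀ y ∈ B, ∀ y' ∈ B, lo y = lo y' → hi y = hi y' → y = y' := by
    intro y _ y' _ e1 e2
    apply Subtype.ext
    rw [h4 y, h4 y', e1, e2]
  have hinjA : ∀ x ∈ A, ∀ x' ∈ A, lo x = lo x' → hi x = hi x' → x = x' := by
    intro x _ x' _ e1 e2
    apply Subtype.ext
    rw [h4 x, h4 x', e1, e2]
  have hBle := split_bound B lo hi (fun y _ => h2 y) hinjB (lo v) (hi v)
    (fun y hy => hcross v hvA y hy)
  have hAle := split_bound A lo hi (fun x _ => h2 x) hinjA (lo w) (hi w)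
    (fun x hx => (hcross x hx w hwB).symm)
  rw [← hE] at hBle
  rw [← hF] at hAle
  have hEsplit : (E.filter (fun t => lo v < t ∧ t < hi v + 2)).card +
      (E.filter (fun t => ¬(lo v < t ∧ t < hi v + 2))).card = E.card :=
    Finset.card_filter_add_card_filter_not _
  have hFsplit : (F.filter (fun t => lo w < t ∧ t < hi w + 2)).card +
      (F.filter (fun t => ¬(lo w < t ∧ t < hi w + 2))).card = F.card :=
    Finset.card_filter_add_card_filter_not _
  have hnum : 4 * (A.card + B.card) ≤ (n+1)*(n+1) + 4 := by
    apply final_num _ _ _ _ _ _ _ hAle hBle <;> omega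
  have hKK := iMax_lower (n := n)
  have hpar := numeric_parity n
  set KK := ((n+2)/2) * ((n+1) - (n+2)/2) with hKKdef
  set m := (n+1)*(n+1) with hm
  omega
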